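/- Let d ≥ 3 and let S ⊆ [n] be a subset that is not G-admissible for a forest G on [n], witnessed by a vertex i ∈ S with rank(N_G(i)∩([n]∖S)) < d in M(G_{[n]∖S}). Then V_S ⊆ V_{S∖{i}}, i.e., the closure of U(S) is contained in the closure of U(S∖{i}). -/

import Mathlib

/-- `U(S)`. -/
def USet {n : ℕ} (d : ℕ) (G : SimpleGraph (Fin n)) (S : Set (Fin n)) :
    Set (Fin n × Fin d → ℂ) :=
  {p | (∀ i j : Fin n, G.Adj i j → ∑ k, p (i, k) * p (j, k) = 0) ∧
    ∀ i : Fin n, (∀ k : Fin d, p (i, k) = 0) ↔ i ∈ S}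

/-- If a vertex `i ∈ S` witnesses non-admissibility, i.e. the set
`N_G(i) ∩ ([n]∖S)` has rank `< d` in the paving matroid `M(G_{[n]∖S})`
(no `d`-subset of it avoids all dependent hyperplanes), then the Zariski closure
of `U(S)` is contained in the Zariski closure of `U(S ∖ {i})`. -/
theorem VS_subset_of_not_admissible {n d : ℕ} (hd : 3 ≤ d)
    (G : SimpleGraph (Fin n)) (hG : G.IsAcyclic)
    (S : Set (Fin n)) (i : Fin n) (hi : i ∈ S)
    (hrank : ¬ ∃ B : Set (Fin n), B ⊆ G.neighborSet i ∩ Sᶜ ∧ B.ncard = d ∧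
      ∀ j ∈ Sᶜ, d ≤ (G.neighborSet j ∩ Sᶜ).ncard → ¬ B ⊆ G.neighborSet j ∩ Sᶜ) :
    MvPolynomial.zeroLocus ℂ (MvPolynomial.vanishingIdeal ℂ (USet d G S)) ⊆
      MvPolynomial.zeroLocus ℂ (MvPolynomial.vanishingIdeal ℂ (USet d G (S \ {i}))) := by
  apply MvPolynomial.zeroLocus_anti_mono
  intro f hf
  rw [MvPolynomial.mem_vanishingIdeal_iff] at hf ⊢
  intro p hp
  obtain ⟨horth, hzero⟩ := hp
  -- the span of the neighbor vectors
  set T : Set (Fin d → ℂ) := {v | ∃ j ∈ G.neighborSet i, v = fun k => p (j, k)} with hT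
  have hWne : Submodule.span ℂ T ≠ ⊤ := by
    intro htop
    obtain ⟨b, hbT, hbspan, hbli⟩ := exists_linearIndependent ℂ T
    rw [htop] at hbspan
    have hbfin : b.Finite := hbli.setFinite
    have : Fintype b := hbfin.fintype
    have hcard : b.toFinset.card = d := by
      have := finrank_span_set_eq_card hbli
      rw [hbspan] at this
      simpa using this.symm
    -- each vector in b comes from a neighbor not in S
    have hchoice : ∀ v ∈ b, ∃ j : Fin n, j ∈ G.neighborSet i ∩ Sᶜ ∧ (fun k => p (j, k)) = v := by
      intro v hv
      obtain ⟨j, hj, hjv⟩ := hbT hv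
      refine ⟨j, ⟨hj, ?_⟩, hjv.symm⟩
      intro hjS
      have : v = 0 := by
        funext k
        rw [hjv]
        exact (hzero j).mpr hjS k
      exact hbli.ne_zero ⟨v, hv⟩ this
    choose g hg1 hg2 using hchoice
    set e : b → Fin n := fun v => g v.1 v.2 with he
    have heinj : Function.Injective e := by
      intro v v' hvv
      have h1 := hg2 v.1 v.2
      have h2 := hg2 v'.1 v'.2
      apply Subtype.ext
      have hvv' : g v.1 v.2 = g v'.1 v'.2 := hvv
      rw [← h1, ← h2, hvv']
    set B : Set (Fin n) := Set.range e with hB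
    have hBsub : B ⊆ G.neighborSet i ∩ Sᶜ := by
      rintro j ⟨v, rfl⟩; exact hg1 v.1 v.2
    have hBcard : B.ncard = d := by
      rw [hB, ← Nat.card_coe_set_eq, Nat.card_range_of_injective heinj,
        Nat.card_coe_set_eq, Set.ncard_eq_toFinset_card' b, hcard]
    push_neg at hrank
    obtain ⟨j, hjS, hjc, hjB⟩ := hrank B hBsub hBcard
    -- the functional x ↦ ∑ k, x k * p (j, k) vanishes on b, hence everywhere
    set ψ : (Fin d → ℂ) →ₗ[ℂ] ℂ :=
      ∑ k, p (j, k) • (LinearMap.proj k : ((Fin d → ℂ) →ₗ[ℂ] ℂ)) with hψ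
    have hψap : ∀ x : Fin d → ℂ, ψ x = ∑ k, p (j, k) * x k := by
      intro x; simp [hψ]
    have hbker : b ⊆ LinearMap.ker ψ := by
      intro v hv
      have hmB : g v hv ∈ B := ⟨⟨v, hv⟩, rfl⟩
      have hadj : G.Adj j (g v hv) := (hjB hmB).1
      have := horth j (g v hv) hadj
      rw [SetLike.mem_coe, LinearMap.mem_ker, hψap, ← hg2 v hv]
      simpa using this
    have hker : ∀ x, ψ x = 0 := by
      intro x
      have : Submodule.span ℂ b ≤ LinearMap.ker ψ := Submodule.span_le.mpr hbker
      rw [hbspan] at this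
      exact this (Submodule.mem_top)
    have hjzero : ∀ k, p (j, k) = 0 := by
      intro k
      have := hker (fun k' => if k = k' then 1 else 0)
      rw [hψap] at this
      simpa using this
    exact hjS ((hzero j).mp hjzero)
  -- get a nonzero functional vanishing on T
  obtain ⟨φ, hφne, hφbot⟩ :=
    Submodule.exists_dual_map_eq_bot_of_lt_top (lt_top_iff_ne_top.mpr hWne) inferInstance
  set w : Fin d → ℂ := fun k => φ (fun j => if k = j then 1 else 0) with hw
  have hφap : ∀ x : Fin d → ℂ, φ x = ∑ k, x k * w k := by
    intro x
    rw [LinearMap.pi_apply_eq_sum_univ φ x]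
    simp only [smul_eq_mul, hw]
  have hwne : ∃ k, w k ≠ 0 := by
    by_contra h
    push_neg at h
    exact hφne (LinearMap.ext fun x => by rw [hφap]; simp [h])
  have hφT : ∀ j ∈ G.neighborSet i, ∑ k, w k * p (j, k) = 0 := by
    intro j hj
    have hmem : (fun k => p (j, k)) ∈ Submodule.span ℂ T :=
      Submodule.subset_span ⟨j, hj, rfl⟩
    have : φ (fun k => p (j, k)) = 0 := by
      have := hφbot ▸ Submodule.mem_map_of_mem (f := φ) hmem
      simpa using this
    rw [hφap] at this
    rw [← this]
    exact Finset.sum_congr rfl fun k _ => mul_comm _ _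
  -- the deformed point as a polynomial family
  set g : Fin n × Fin d → Polynomial ℂ :=
    fun v => if v.1 = i then Polynomial.C (w v.2) * Polynomial.X else Polynomial.C (p v) with hg
  set q : Polynomial ℂ := MvPolynomial.aeval g f with hq
  have haev : ∀ (x : Fin n × Fin d → ℂ) (h : MvPolynomial (Fin n × Fin d) ℂ),
      MvPolynomial.aeval x h = MvPolynomial.eval x h := by
    intro x h
    rw [← MvPolynomial.coe_aeval_eq_eval]
    rfl
  have key : ∀ t : ℂ, Polynomial.eval t q =
      MvPolynomial.eval (fun v => if v.1 = i then w v.2 * t else p v) f := by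
    intro t
    have hcomp := congrFun (congrArg DFunLike.coe
      (MvPolynomial.comp_aeval (f := g) (Polynomial.aeval t))) f
    simp only [AlgHom.coe_comp, Function.comp_apply] at hcomp
    have h1 : Polynomial.eval t q = (Polynomial.aeval t) ((MvPolynomial.aeval g) f) := by
      rw [hq, ← Polynomial.coe_aeval_eq_eval]
    have harg : (fun v : Fin n × Fin d => (Polynomial.aeval t) (g v)) =
        (fun v : Fin n × Fin d => if v.1 = i then w v.2 * t else p v) := by
      funext v
      by_cases hv : v.1 = i <;> simp [hg, hv]
    rw [h1, hcomp, harg, haev]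
  have hroot : ∀ t : ℂ, t ≠ 0 → Polynomial.eval t q = 0 := by
    intro t ht
    rw [key t]
    apply hf
    constructor
    · intro a b hab
      have hab' : a ≠ b := hab.ne
      by_cases ha : a = i
      · have hb : ¬ b = i := fun h => hab' (h ▸ ha ▸ rfl)
        have hterm : ∀ k : Fin d,
            (if ((a, k) : Fin n × Fin d).1 = i then w ((a, k) : Fin n × Fin d).2 * t
              else p (a, k)) *
            (if ((b, k) : Fin n × Fin d).1 = i then w ((b, k) : Fin n × Fin d).2 * t
              else p (b, k)) = t * (w k * p (b, k)) := by
          intro k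
          rw [if_pos ha, if_neg hb]; ring
        rw [Finset.sum_congr rfl (fun k _ => hterm k), ← Finset.mul_sum,
          hφT b (by rw [SimpleGraph.mem_neighborSet, ← ha]; exact hab), mul_zero]
      · by_cases hb : b = i
        · have hterm : ∀ k : Fin d,
              (if ((a, k) : Fin n × Fin d).1 = i then w ((a, k) : Fin n × Fin d).2 * t
                else p (a, k)) *
              (if ((b, k) : Fin n × Fin d).1 = i then w ((b, k) : Fin n × Fin d).2 * t
                else p (b, k)) = t * (w k * p (a, k)) := by
            intro k
            rw [if_neg ha, if_pos hb]; ring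
          rw [Finset.sum_congr rfl (fun k _ => hterm k), ← Finset.mul_sum,
            hφT a (by rw [SimpleGraph.mem_neighborSet, ← hb]; exact hab.symm), mul_zero]
        · have hterm : ∀ k : Fin d,
              (if ((a, k) : Fin n × Fin d).1 = i then w ((a, k) : Fin n × Fin d).2 * t
                else p (a, k)) *
              (if ((b, k) : Fin n × Fin d).1 = i then w ((b, k) : Fin n × Fin d).2 * t
                else p (b, k)) = p (a, k) * p (b, k) := by
            intro k
            rw [if_neg ha, if_neg hb]
          rw [Finset.sum_congr rfl (fun k _ => hterm k)]
          exact horth a b hab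
    · intro a
      by_cases ha : a = i
      · constructor
        · intro h
          obtain ⟨k, hk⟩ := hwne
          have := h k
          simp only [ha, if_pos] at this
          exact absurd (mul_eq_zero.mp this) (by push_neg; exact ⟨hk, ht⟩)
        · intro h
          exact absurd ha h.2
      · constructor
        · intro h
          refine ⟨(hzero a).mp fun k => ?_, ha⟩
          have := h k
          simpa only [ha, if_neg, if_false, ite_false] using this
        · intro h
          intro k
          simp only [ha, if_neg, if_false, ite_false]
          exact (hzero a).mpr h.1 k
  have hq0 : q = 0 := by
    apply Polynomial.eq_zero_of_infinite_isRoot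
    apply Set.Infinite.mono (s := {t : ℂ | t ≠ 0})
    · intro t ht; exact hroot t ht
    · have : ({0}ᶜ : Set ℂ) = {t : ℂ | t ≠ 0} := by ext; simp
      rw [← this]
      exact (Set.finite_singleton 0).infinite_compl
  have := key 0
  rw [hq0] at this
  simp only [Polynomial.eval_zero] at this
  have hpe : (fun v : Fin n × Fin d => if v.1 = i then w v.2 * (0:ℂ) else p v) = p := by
    funext v
    by_cases hv : v.1 = i
    · rw [if_pos hv, mul_zero]
      have := (hzero i).mpr hi v.2
      rw [show v = (i, v.2) by rw [← hv]]
      exact this.symm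
    · rw [if_neg hv]
  rw [hpe] at this
  exact this.symm
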